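/- Let μ ≥ 1 and n ≥ 1 be natural numbers and let ν : Fin μ → ℕ. Then ∑_{f} ∑_{i : 0 < f(i) < n} ((ν i : ℤ) − 1) = ( C(n+μ−2, n−1) − 1 ) · ( (∑_i ν i) − μ ), where the outer sum ranges over all functions f : Fin μ → ℕ with ∑_i f(i) = n, the inner sum ranges over those indices i ∈ Fin μ with 0 < f(i) < n, and the identity is read in ℤ. -/

import Mathlib

open Finset

/-- Prepending a value to a tuple, as an embedding. -/
def consEmb (k a : ℕ) : (Fin k → ℕ) ↪ (Fin (k + 1) → ℕ) where
  toFun g := Fin.cons a g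
  inj' := fun g g' h => funext fun j => by simpa using congrFun h j.succ

/-- Stars and bars: the number of `(k+1)`-tuples of naturals summing to `n`. -/
lemma card_antidiagonalTuple (k n : ℕ) :
    (Finset.Nat.antidiagonalTuple (k + 1) n).card = (n + k).choose n := by
  induction k generalizing n with
  | zero => simp
  | succ k ih =>
    have hdecomp : Finset.Nat.antidiagonalTuple (k + 2) n =
        (Finset.HasAntidiagonal.antidiagonal n).biUnion
          (fun p : ℕ × ℕ => (Finset.Nat.antidiagonalTuple (k + 1) p.2).map
            (consEmb (k+1) p.1)) := by
      ext f
      simp only [Finset.Nat.mem_antidiagonalTuple, Finset.mem_biUnion,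
        Finset.HasAntidiagonal.mem_antidiagonal, Finset.mem_map, consEmb]
      constructor
      · intro hf
        refine ⟨(f 0, ∑ i : Fin (k + 1), f i.succ), ?_, Fin.tail f, ?_, Fin.cons_self_tail f⟩
        · exact (Fin.sum_univ_succ f).symm.trans hf
        · rfl
      · rintro ⟨⟨a, b⟩, hab, g, hg, rfl⟩
        rw [Fin.sum_univ_succ]
        show a + ∑ x : Fin (k + 1), g x = n
        simpa [hg] using hab
    have hdisj : ∀ p ∈ Finset.HasAntidiagonal.antidiagonal n, ∀ q ∈ Finset.HasAntidiagonal.antidiagonal n, p ≠ q →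
        Disjoint ((Finset.Nat.antidiagonalTuple (k + 1) p.2).map
            (consEmb (k+1) p.1))
          ((Finset.Nat.antidiagonalTuple (k + 1) q.2).map
            (consEmb (k+1) q.1)) := by
      rintro ⟨a, b⟩ _ ⟨c, d⟩ _ hpq
      rw [Finset.disjoint_left]
      rintro f hf hf'
      simp only [Finset.mem_map, consEmb, Function.Embedding.coeFn_mk,
        Finset.Nat.mem_antidiagonalTuple] at hf hf'
      obtain ⟨g, hg, rfl⟩ := hf
      obtain ⟨g', hg', hgg⟩ := hf'
      apply hpq
      have h1 : c = a := by exact congrFun hgg 0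
      have h2 : g' = g := funext fun j => by exact congrFun hgg j.succ
      subst h1; subst h2
      rw [Prod.mk.injEq]
      exact ⟨rfl, hg.symm.trans hg'⟩
    rw [hdecomp, Finset.card_biUnion hdisj]
    simp only [Finset.card_map, ih]
    have hswap := Finset.Nat.sum_antidiagonal_swap (n := n)
      (f := fun p : ℕ × ℕ => (p.2 + k).choose p.2)
    simp only [Prod.snd_swap] at hswap
    rw [← hswap]
    rw [Finset.Nat.sum_antidiagonal_eq_sum_range_succ (fun a b => (a + k).choose a)]
    have hsymm : ∀ i ∈ Finset.range (n + 1), (i + k).choose i = (i + k).choose k := by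
      intro i _
      have := Nat.choose_symm (Nat.le_add_left k i)
      simpa using this
    rw [Finset.sum_congr rfl hsymm, Nat.sum_range_add_choose]
    rw [← Nat.choose_symm (by omega : n ≤ n + (k + 1))]
    congr 1
    omega


/-- Shifting down the `i`-th coordinate gives a bijection between tuples summing to
`l + 1` with positive `i`-th coordinate and tuples summing to `l`. -/
lemma card_filter_pos (m l : ℕ) (i : Fin (m + 1)) :
    ((Finset.Nat.antidiagonalTuple (m + 1) (l + 1)).filter (fun f => 0 < f i)).card
      = (Finset.Nat.antidiagonalTuple (m + 1) l).card := by
  have key : ∀ (f : Fin (m + 1) → ℕ) (b : ℕ),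
      ∑ j, Function.update f i b j = b + ∑ j ∈ Finset.univ.erase i, f j := by
    intro f b
    rw [Finset.sum_update_of_mem (Finset.mem_univ i)]
    congr 1
    simp [Finset.sdiff_singleton_eq_erase]
  have hsum : ∀ f : Fin (m + 1) → ℕ, ∑ j, f j = f i + ∑ j ∈ Finset.univ.erase i, f j :=
    fun f => (Finset.add_sum_erase _ f (Finset.mem_univ i)).symm
  apply Finset.card_nbij' (fun f => Function.update f i (f i - 1))
      (fun g => Function.update g i (g i + 1))
  · intro f hf
    simp only [Finset.mem_coe, Finset.mem_filter, Finset.Nat.mem_antidiagonalTuple] at hf ⊢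
    rw [key]
    have := hsum f
    omega
  · intro g hg
    simp only [Finset.mem_coe, Finset.mem_filter, Finset.Nat.mem_antidiagonalTuple] at hg ⊢
    refine ⟨?_, by simp⟩
    rw [key]
    have := hsum g
    omega
  · intro f hf
    simp only [Finset.mem_coe, Finset.mem_filter] at hf
    funext j
    rcases eq_or_ne j i with rfl | hj
    · simp; omega
    · simp [Function.update_of_ne hj]
  · intro g _
    funext j
    rcases eq_or_ne j i with rfl | hj
    · simp
    · simp [Function.update_of_ne hj]

/-- The number of tuples summing to `l + 1` whose `i`-th coordinate is strictly between
`0` and `l + 1`. -/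
lemma card_filter_mid (m l : ℕ) (i : Fin (m + 1)) :
    ((Finset.Nat.antidiagonalTuple (m + 1) (l + 1)).filter
        (fun f => 0 < f i ∧ f i < l + 1)).card
      = (l + m).choose l - 1 := by
  have hmem : Pi.single i (l + 1) ∈
      (Finset.Nat.antidiagonalTuple (m + 1) (l + 1)).filter (fun f => 0 < f i) := by
    simp [Finset.Nat.mem_antidiagonalTuple]
  have hsub : (Finset.Nat.antidiagonalTuple (m + 1) (l + 1)).filter
        (fun f => 0 < f i ∧ f i < l + 1)
      = ((Finset.Nat.antidiagonalTuple (m + 1) (l + 1)).filter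
          (fun f => 0 < f i)).erase (Pi.single i (l + 1)) := by
    ext f
    simp only [Finset.mem_filter, Finset.mem_erase, Finset.Nat.mem_antidiagonalTuple]
    constructor
    · rintro ⟨hf, hpos, hlt⟩
      refine ⟨fun hcon => ?_, hf, hpos⟩
      rw [hcon] at hlt
      simp at hlt
    · rintro ⟨hne, hf, hpos⟩
      refine ⟨hf, hpos, ?_⟩
      by_contra hge
      push_neg at hge
      have hle : f i ≤ l + 1 := by
        rw [← hf]
        exact Finset.single_le_sum (fun j _ => Nat.zero_le _) (Finset.mem_univ i)
      have hfi : f i = l + 1 := le_antisymm hle hge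
      apply hne
      have hzero : ∑ j ∈ Finset.univ.erase i, f j = 0 := by
        have := (Finset.add_sum_erase _ f (Finset.mem_univ i)).symm
        omega
      rw [Finset.sum_eq_zero_iff] at hzero
      funext j
      rcases eq_or_ne j i with rfl | hj
      · simpa using hfi
      · rw [Pi.single_eq_of_ne hj]
        exact hzero j (Finset.mem_erase.mpr ⟨hj, Finset.mem_univ j⟩)
  rw [hsub, Finset.card_erase_of_mem hmem, card_filter_pos, card_antidiagonalTuple]

theorem gamma_n_cut_vertex (μ n : ℕ) (hμ : 1 ≤ μ) (hn : 1 ≤ n) (ν : Fin μ → ℕ) :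
    ∑ f ∈ Finset.Nat.antidiagonalTuple μ n,
        ∑ i ∈ Finset.univ.filter (fun i : Fin μ => 0 < f i ∧ f i < n), ((ν i : ℤ) - 1)
      = (((n + μ - 2).choose (n - 1) : ℤ) - 1) * ((∑ i, (ν i : ℤ)) - μ) := by
  obtain ⟨m, rfl⟩ : ∃ m, μ = m + 1 := ⟨μ - 1, by omega⟩
  obtain ⟨l, rfl⟩ : ∃ l, n = l + 1 := ⟨n - 1, by omega⟩
  have hexp : l + 1 + (m + 1) - 2 = l + m := by omega
  have hexp2 : l + 1 - 1 = l := by omega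
  rw [hexp, hexp2]
  simp only [Finset.sum_filter]
  rw [Finset.sum_comm]
  have hchoose : 1 ≤ (l + m).choose l := Nat.choose_pos (by omega)
  have hcard : ∀ i : Fin (m + 1),
      ∑ f ∈ Finset.Nat.antidiagonalTuple (m + 1) (l + 1),
        (if 0 < f i ∧ f i < l + 1 then ((ν i : ℤ) - 1) else 0)
      = (((l + m).choose l : ℤ) - 1) * ((ν i : ℤ) - 1) := by
    intro i
    rw [← Finset.sum_filter, Finset.sum_const, card_filter_mid m l i, nsmul_eq_mul]
    congr 1
    push_cast [Nat.cast_sub hchoose]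
    ring
  rw [Finset.sum_congr rfl (fun i _ => hcard i)]
  rw [← Finset.mul_sum, Finset.sum_sub_distrib, Finset.sum_const, Finset.card_univ]
  simp
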